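/- arXiv:2105.13408 — 3 statements merged into one kernel-verified Lean document; each statement's English description precedes it below -/
import Mathlib

section
/- Let d ∈ U_1 and 0 ≤ j ≤ i ≤ n. Then φ_d(P(i,j)) ≡ 0 mod p^{i−j}. More precisely: (1) if p > 2, or d ∈ U_2, or j > 0, then for 0 ≤ j < i one has φ_d(P(i,j)) ≡ p^{i−j} mod p^{i−j+1}; (2) if p = 2, d = −1, j = 0 and i > 0, then φ_d(P(i,0)) = 0; (3) if p = 2, d ∈ −U_v ∖ −U_{v+1} for some v ≥ 2, j = 0 and i > 0, then φ_d(P(i,0)) ≡ 2^{i+v−1} mod 2^{i+v}. -/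
open scoped BigOperators

/-- `U_i = 1 + p^i ℤ` as a subset of `ℤ`. -/
def Uset (p i : ℕ) : Set ℤ := {d : ℤ | ∃ k : ℤ, d = 1 + (p : ℤ) ^ i * k}

/-- `−U_i = {−u : u ∈ U_i}` as a subset of `ℤ`. -/
def negUset (p i : ℕ) : Set ℤ := {d : ℤ | -d ∈ Uset p i}

/-- The coefficient ring `R_m = ℤ/p^mℤ`. -/
abbrev Rm (p m : ℕ) : Type := ZMod (p ^ m)

/-- The cyclic group of order `p^n`, written multiplicatively. -/
abbrev Cyc (p n : ℕ) : Type := Multiplicative (ZMod (p ^ n))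

/-- The group ring `R_m G_n` of the cyclic group of order `p^n` over `ℤ/p^mℤ`. -/
abbrev RG (p m n : ℕ) : Type := MonoidAlgebra (Rm p m) (Cyc p n)

/-- The distinguished generator `σ` of the cyclic group of order `p^n`,
viewed as an element of the group ring `R_m G_n`. -/
noncomputable def sg (p m n : ℕ) : RG p m n :=
  MonoidAlgebra.of (Rm p m) (Cyc p n) (Multiplicative.ofAdd (1 : ZMod (p ^ n)))

/-- The norm operator `P(i,j) = Σ_{k=0}^{p^{i-j}-1} σ^{k p^j}` in `R_m G_n`. -/
noncomputable def Pel (p m n i j : ℕ) : RG p m n :=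
  ∑ k ∈ Finset.range (p ^ (i - j)), sg p m n ^ (k * p ^ j)

/-- The operator `Q_d(i,j) = Σ_{k=0}^{p^{i-j}-1} (d^{p^j})^{p^{i-j}-1-k} (σ^{p^j})^k` in `R_m G_n`. -/
noncomputable def Qel (p m n : ℕ) (d : ℤ) (i j : ℕ) : RG p m n :=
  ∑ k ∈ Finset.range (p ^ (i - j)),
    ((d : RG p m n) ^ p ^ j) ^ (p ^ (i - j) - 1 - k) * sg p m n ^ (p ^ j * k)

/-- `p^a` for `a ∈ {−∞} ∪ ℕ`, with the convention `p^{−∞} = 0`. -/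
def pexp (p : ℕ) (a : WithBot ℕ) : ℕ := WithBot.recBotCoe 0 (fun k => p ^ k) a

/-- `σ^{p^a}` for `a ∈ {−∞} ∪ ℕ`, with the convention `σ^{p^{−∞}} = 0`. -/
noncomputable def sigmaPow (p m n : ℕ) (a : WithBot ℕ) : RG p m n :=
  WithBot.recBotCoe 0 (fun k => sg p m n ^ p ^ k) a

/-- `P(i,c)` for `c ∈ {−∞} ∪ ℕ`, with the convention `P(i,−∞) = 1`. -/
noncomputable def PelW (p m n i : ℕ) (c : WithBot ℕ) : RG p m n :=
  WithBot.recBotCoe 1 (fun k => Pel p m n i k) c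

/-- The submodule of relations defining `X_{a,d,m}`: the free module on generators
`y = e 0` and `x_i = e (i+1)` modulo `(σ-d)y = Σ p^i x_i` and `σ^{p^{a_i}} x_i = x_i`
(where `σ^{p^{−∞}} x_i = 0`). -/
noncomputable def Xrel (p m n : ℕ) (a : ℕ → WithBot ℕ) (d : ℤ) :
    Submodule (RG p m n) (Fin (m + 1) → RG p m n) :=
  Submodule.span (RG p m n)
    (insert
      ((sg p m n - (d : RG p m n)) •
          (Pi.single (0 : Fin (m + 1)) 1 : Fin (m + 1) → RG p m n) -
        ∑ i : Fin m, ((p : RG p m n) ^ (i : ℕ)) •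
          (Pi.single i.succ 1 : Fin (m + 1) → RG p m n))
      (Set.range fun i : Fin m =>
        (sigmaPow p m n (a (i : ℕ)) - 1) •
          (Pi.single i.succ 1 : Fin (m + 1) → RG p m n)))

/-- The `R_m G`-module `X_{a,d,m}`. -/
abbrev Xmod (p m n : ℕ) (a : ℕ → WithBot ℕ) (d : ℤ) : Type :=
  (Fin (m + 1) → RG p m n) ⧸ Xrel p m n a d

/-- The generator `y` of `X_{a,d,m}`. -/
noncomputable def Xy (p m n : ℕ) (a : ℕ → WithBot ℕ) (d : ℤ) : Xmod p m n a d :=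
  Submodule.Quotient.mk (Pi.single (0 : Fin (m + 1)) 1 : Fin (m + 1) → RG p m n)

/-- The generator `x_i` of `X_{a,d,m}`. -/
noncomputable def Xx (p m n : ℕ) (a : ℕ → WithBot ℕ) (d : ℤ) (i : Fin m) : Xmod p m n a d :=
  Submodule.Quotient.mk (Pi.single i.succ 1 : Fin (m + 1) → RG p m n)

/-- A module is indecomposable if it is nonzero and is not the direct sum of two
nonzero submodules. -/
def IsIndecomposableModule (R M : Type*) [Ring R] [AddCommGroup M] [Module R M] : Prop :=
  Nontrivial M ∧ ∀ V W : Submodule R M, IsCompl V W → V = ⊥ ∨ W = ⊥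

/-- Hypotheses (I)–(V) of Theorem 1, together with the requirement
`a ∈ {−∞,0,1,…,n}^m`. -/
def Hyp (p n m : ℕ) (a : ℕ → WithBot ℕ) (d : ℤ) : Prop :=
  (∀ i < m, a i ≤ (n : WithBot ℕ)) ∧
  d ∈ Uset p 1 ∧
  (∀ i < m, d ^ pexp p (a i) ∈ Uset p (i + 1)) ∧
  (∀ i j : ℕ, i < m → 1 ≤ j → i + j < m → a (i + j) ≠ ⊥ →
    ¬(p = 2 ∧ d ∉ Uset p 2 ∧ i = 0 ∧ a 0 = 0) →
    a i + (j : WithBot ℕ) < a (i + j)) ∧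
  (p = 2 → d ∉ Uset p 2 → a 0 = 0 → ∀ j, 1 ≤ j → j < m → a j ≠ 0) ∧
  (p = 2 → n = 1 → a 0 = ⊥) ∧
  (∀ v : ℕ, p = 2 → 2 ≤ m → 2 ≤ v → d ∈ negUset p v → d ∉ negUset p (v + 1) →
    a 0 = 0 → ∀ i, v ≤ i → i < m → ((i - (v - 1) : ℕ) : WithBot ℕ) < a i ∧ a i ≠ ⊥)

/-- The invariant `l(u)`: the dimension over `F_p` of the `F_p G`-submodule of `M/pM`
generated by the class of `u`; equivalently the least `k` with `(σ-1)^k u ∈ pM`. -/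
noncomputable def ell (p m n : ℕ) {M : Type*} [AddCommGroup M] [Module (RG p m n) M]
    (u : M) : ℕ :=
  sInf {k : ℕ | ((sg p m n - 1) ^ k) • u ∈
    (Ideal.span {(p : RG p m n)} • (⊤ : Submodule (RG p m n) M) : Submodule (RG p m n) M)}

/-- `M^⋆ = {u ∈ M : (σ-1)u = 0 and pu = 0}`. -/
def Mstar (p m n : ℕ) (M : Type*) [AddCommGroup M] [Module (RG p m n) M] : Set M :=
  {u : M | (sg p m n - 1) • u = 0 ∧ (p : RG p m n) • u = 0}
/-- The group ring `ℤG` of the cyclic group of order `p^n`. -/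
abbrev ZG (p n : ℕ) : Type := MonoidAlgebra ℤ (Cyc p n)

/-- The generator `σ` as an element of `ℤG`. -/
noncomputable def sgZ (p n : ℕ) : ZG p n :=
  MonoidAlgebra.of ℤ (Cyc p n) (Multiplicative.ofAdd (1 : ZMod (p ^ n)))

/-- The norm operator `P(i,j)` as an element of `ℤG`. -/
noncomputable def PelZ (p n i j : ℕ) : ZG p n :=
  ∑ k ∈ Finset.range (p ^ (i - j)), sgZ p n ^ (k * p ^ j)

/-- The additive map `φ_d : ℤG → ℤ` induced by `σ^t ↦ d^t` for `0 ≤ t < p^n`. -/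
noncomputable def phiZ (p n : ℕ) (d : ℤ) (f : ZG p n) : ℤ :=
  ∑ t ∈ Finset.range (p ^ n), f.coeff (Multiplicative.ofAdd ((t : ℕ) : ZMod (p ^ n))) * d ^ t

/-- The map `φ_d^{(m)} : R_m G_n → R_m` induced by `σ^t ↦ d^t` for `0 ≤ t < p^n`. -/
noncomputable def phiM (p m n : ℕ) (d : ℤ) (f : RG p m n) : Rm p m :=
  ∑ t ∈ Finset.range (p ^ n), f.coeff (Multiplicative.ofAdd ((t : ℕ) : ZMod (p ^ n))) * (d : Rm p m) ^ t

/-- The natural `R_m`-algebra homomorphism `χ_j : R_m G_i → R_m G_j` for `j ≤ i`. -/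
noncomputable def chiMap (p m : ℕ) {i j : ℕ} (h : j ≤ i) : RG p m i →+* RG p m j :=
  MonoidAlgebra.mapDomainRingHom (Rm p m)
    (AddMonoidHom.toMultiplicative
      ((ZMod.castHom (pow_dvd_pow p h) (ZMod (p ^ j))).toAddMonoidHom))

/-- Coefficient reduction `R_m G_n → R_{m-1} G_n`. -/
noncomputable def barMap (p m n : ℕ) (f : RG p m n) : RG p (m - 1) n :=
  MonoidAlgebra.ofCoeff (Finsupp.mapRange (ZMod.castHom (pow_dvd_pow p (Nat.sub_le m 1)) (ZMod (p ^ (m - 1))))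
    (map_zero _) f.coeff)

/-- `W/p^{m-1}W` is a free `R_{m-1}G_k`-module: there is an additive isomorphism with
a finite power of `R_{m-1}G_k` intertwining the actions of `σ` (and hence of the
coefficients, which act through the additive group structure). -/
def QuotFree (p m n k : ℕ) {M : Type*} [AddCommGroup M] [Module (RG p m n) M]
    (W : Submodule (RG p m n) M) : Prop :=
  ∃ (r : ℕ) (e : (W ⧸ (Ideal.span {(p : RG p m n) ^ (m - 1)} •
      (⊤ : Submodule (RG p m n) W))) ≃+ (Fin r → RG p (m - 1) k)),
    ∀ q, e (sg p m n • q) = fun s => sg p (m - 1) k * e q s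

open Finset in
lemma geom_split (x : ℤ) (a b : ℕ) :
    ∑ k ∈ range (a * b), x ^ k =
      (∑ k ∈ range a, x ^ k) * ∑ l ∈ range b, (x ^ a) ^ l := by
  induction b with
  | zero => simp
  | succ b ih =>
    rw [Nat.mul_succ, Finset.sum_range_add, ih, Finset.sum_range_succ, mul_add]
    congr 1
    rw [← pow_mul, Finset.sum_mul]
    exact Finset.sum_congr rfl fun k _ => by rw [← pow_add, add_comm]

lemma bin2 (x : ℤ) (l : ℕ) : x ^ 2 ∣ (1 + x) ^ l - (1 + l * x) := by
  induction l with
  | zero => simp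
  | succ l ih =>
    have : (1 + x) ^ (l + 1) - (1 + (l + 1 : ℕ) * x)
        = (1 + x) * ((1 + x) ^ l - (1 + l * x)) + l * x ^ 2 := by
      push_cast; ring
    rw [this]
    exact dvd_add (Dvd.dvd.mul_left ih _) (Dvd.dvd.mul_left dvd_rfl _)

lemma strong2 (f : ℤ) (h : (4 : ℤ) ∣ f - 1) (s : ℕ) :
    (2 : ℤ) ^ (s + 2) ∣ f ^ 2 ^ s - 1 := by
  induction s with
  | zero => simpa using h
  | succ s ih =>
    have h2 : (2 : ℤ) ∣ f ^ 2 ^ s + 1 := by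
      have hd : (2:ℤ) ∣ f - 1 := dvd_trans (by norm_num) h
      obtain ⟨c, hc⟩ := hd
      have hodd : Odd f := ⟨c, by linarith⟩
      obtain ⟨e, he⟩ := hodd.pow (n := 2 ^ s)
      exact ⟨e + 1, by rw [he]; ring⟩
    have : f ^ 2 ^ (s + 1) - 1 = (f ^ 2 ^ s - 1) * (f ^ 2 ^ s + 1) := by
      rw [pow_succ, pow_mul]; ring
    rw [this, pow_succ]
    exact mul_dvd_mul ih h2

lemma dvd_pow_sub_one' {c x : ℤ} (h : c ∣ x - 1) (m : ℕ) : c ∣ x ^ m - 1 := by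
  refine h.trans ?_
  simpa using sub_dvd_pow_sub_pow x 1 m

lemma Todd (p : ℕ) (hodd : Odd p) (w : ℤ) :
    (p:ℤ)^2 ∣ (∑ l ∈ Finset.range p, (1 + (p:ℤ)*w)^l) - p := by
  obtain ⟨q, hq⟩ := hodd
  have hgauss : (∑ l ∈ Finset.range p, (l:ℤ)) = p * q := by
    have h := Finset.sum_range_id_mul_two p
    have h2 : (∑ l ∈ Finset.range p, l) * 2 = ((p * q)) * 2 := by
      rw [h, hq]
      have : 2 * q + 1 - 1 = 2 * q := by omega
      rw [this]; ring
    have h3 := Nat.eq_of_mul_eq_mul_right (by norm_num) h2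
    have h4 : ((∑ l ∈ Finset.range p, l : ℕ) : ℤ) = ((p * q : ℕ) : ℤ) := by exact_mod_cast h3
    push_cast at h4
    exact h4
  have hsum1 : ∑ l ∈ Finset.range p, ((1:ℤ) + l*((p:ℤ)*w)) = p + (p:ℤ)^2*(q*w) := by
    rw [Finset.sum_add_distrib, ← Finset.sum_mul, hgauss]
    simp; ring
  have hsplit : (∑ l ∈ Finset.range p, (1 + (p:ℤ)*w)^l) - p
      = (∑ l ∈ Finset.range p, ((1 + (p:ℤ)*w)^l - (1 + l*((p:ℤ)*w)))) + (p:ℤ)^2 * (q*w) := by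
    rw [Finset.sum_sub_distrib, hsum1]; ring
  rw [hsplit]
  refine dvd_add (Finset.dvd_sum fun l _ => ?_) ⟨q*w, rfl⟩
  exact dvd_trans ⟨w^2, by ring⟩ (bin2 ((p:ℤ)*w) l)

lemma geom_main (p : ℕ) (hp : p.Prime) (e : ℤ) (h1 : (p:ℤ) ∣ e - 1)
    (hE : Odd p ∨ (4:ℤ) ∣ e - 1) (s : ℕ) :
    (p:ℤ)^(s+1) ∣ (∑ k ∈ Finset.range (p^s), e^k) - (p:ℤ)^s := by
  induction s with
  | zero => simp
  | succ s ih =>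
    set f := e ^ p ^ s with hf
    have hsplit : ∑ k ∈ Finset.range (p^(s+1)), e^k
        = (∑ k ∈ Finset.range (p^s), e^k) * (∑ l ∈ Finset.range p, f^l) := by
      rw [pow_succ, geom_split]
    have hT2 : (p:ℤ)^2 ∣ (∑ l ∈ Finset.range p, f^l) - p := by
      by_cases hodd : Odd p
      · obtain ⟨w, hw⟩ := dvd_pow_sub_one' h1 (p ^ s)
        have hf1 : f = 1 + (p:ℤ)*w := by rw [hf]; linarith
        rw [hf1]
        exact Todd p hodd w
      · have hp2 : p = 2 := (Nat.Prime.even_iff hp).mp (Nat.not_odd_iff_even.mp hodd)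
        have h4 : (4:ℤ) ∣ e - 1 := by
          rcases hE with h | h
          · exact absurd h hodd
          · exact h
        have hstrong := strong2 e h4 s
        subst hp2
        have hc : ((2:ℕ):ℤ) = 2 := by norm_num
        have heq : (∑ l ∈ Finset.range 2, f^l) - (2:ℤ) = f - 1 := by
          rw [Finset.sum_range_succ, Finset.sum_range_one]; ring
        rw [hc, heq]
        exact dvd_trans (pow_dvd_pow 2 (by omega)) hstrong
    have hTp : (p:ℤ) ∣ ∑ l ∈ Finset.range p, f^l := by
      have h := dvd_trans (dvd_pow_self (p:ℤ) two_ne_zero) hT2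
      have := dvd_add h (dvd_refl (p:ℤ))
      simpa using this
    have key : (∑ k ∈ Finset.range (p^(s+1)), e^k) - (p:ℤ)^(s+1)
        = ((∑ k ∈ Finset.range (p^s), e^k) - (p:ℤ)^s) * (∑ l ∈ Finset.range p, f^l)
          + (p:ℤ)^s * ((∑ l ∈ Finset.range p, f^l) - p) := by
      rw [hsplit]; ring
    rw [key]
    refine dvd_add ?_ ?_
    · have := mul_dvd_mul ih hTp
      rwa [← pow_succ] at this
    · have := mul_dvd_mul (dvd_refl ((p:ℤ)^s)) hT2
      rwa [← pow_add] at this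

lemma four_dvd_sq_sub_one {x : ℤ} (hx : Odd x) : (4:ℤ) ∣ x^2 - 1 := by
  obtain ⟨c, hc⟩ := hx
  exact ⟨c^2 + c, by rw [hc]; ring⟩

lemma phiZ_sgZ_pow (p n : ℕ) (hp : 0 < p ^ n) (d : ℤ) (m : ℕ) (hm : m < p ^ n) :
    phiZ p n d (sgZ p n ^ m) = d ^ m := by
  haveI : NeZero (p ^ n) := ⟨hp.ne'⟩
  have hpow : sgZ p n ^ m
      = MonoidAlgebra.single (Multiplicative.ofAdd ((m : ZMod (p ^ n)))) (1 : ℤ) := by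
    rw [sgZ, ← map_pow]
    have : (Multiplicative.ofAdd (1 : ZMod (p ^ n))) ^ m
        = Multiplicative.ofAdd ((m : ZMod (p ^ n))) := by
      rw [← ofAdd_nsmul]
      congr 1
      simp [nsmul_eq_mul]
    rw [this, MonoidAlgebra.of_apply]
  rw [hpow, phiZ]
  rw [Finset.sum_eq_single m]
  · rw [MonoidAlgebra.coeff_single, Finsupp.single_apply, if_pos rfl, one_mul]
  · intro t ht htm
    rw [MonoidAlgebra.coeff_single, Finsupp.single_apply, if_neg, zero_mul]
    intro hcontra
    apply htm
    have h1 : ((m : ZMod (p ^ n))) = ((t : ZMod (p ^ n))) := by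
      simpa using hcontra
    have := congrArg ZMod.val h1
    rw [ZMod.val_natCast_of_lt hm, ZMod.val_natCast_of_lt (Finset.mem_range.mp ht)] at this
    exact this.symm
  · intro h
    exact absurd (Finset.mem_range.mpr hm) h

lemma phiZ_PelZ (p n : ℕ) (hp : p.Prime) (i j : ℕ) (hji : j ≤ i) (hin : i ≤ n) (d : ℤ) :
    phiZ p n d (PelZ p n i j) = ∑ k ∈ Finset.range (p ^ (i - j)), (d ^ p ^ j) ^ k := by
  have hpn : 0 < p ^ n := Nat.pow_pos (n := n) hp.pos
  have hbound : ∀ k ∈ Finset.range (p ^ (i - j)), k * p ^ j < p ^ n := by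
    intro k hk
    have h1 : k * p ^ j < p ^ (i - j) * p ^ j :=
      Nat.mul_lt_mul_of_lt_of_le (Finset.mem_range.mp hk) le_rfl (Nat.pow_pos (n := j) hp.pos)
    have h2 : p ^ (i - j) * p ^ j = p ^ i := by
      rw [← pow_add, Nat.sub_add_cancel hji]
    calc k * p ^ j < p ^ i := h2 ▸ h1
      _ ≤ p ^ n := Nat.pow_le_pow_right hp.pos hin
  rw [PelZ]
  have hadd : phiZ p n d (∑ k ∈ Finset.range (p ^ (i - j)), sgZ p n ^ (k * p ^ j))
      = ∑ k ∈ Finset.range (p ^ (i - j)), phiZ p n d (sgZ p n ^ (k * p ^ j)) := by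
    simp only [phiZ]
    rw [Finset.sum_comm]
    refine Finset.sum_congr rfl fun t _ => ?_
    rw [MonoidAlgebra.coeff_sum, Finsupp.finset_sum_apply, Finset.sum_mul]
  rw [hadd]
  refine Finset.sum_congr rfl fun k hk => ?_
  rw [phiZ_sgZ_pow p n hpn d _ (hbound k hk), mul_comm k (p ^ j), pow_mul]

/-- Lemma 2.3 (`le:phi`). -/
theorem phi_P (p n : ℕ) (hp : p.Prime) (hn : 1 ≤ n) (d : ℤ) (hd : d ∈ Uset p 1)
    (i j : ℕ) (hji : j ≤ i) (hin : i ≤ n) :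
    ((p : ℤ) ^ (i - j) ∣ phiZ p n d (PelZ p n i j)) ∧
    ((2 < p ∨ d ∈ Uset p 2 ∨ 0 < j) → j < i →
      (p : ℤ) ^ (i - j + 1) ∣ (phiZ p n d (PelZ p n i j) - (p : ℤ) ^ (i - j))) ∧
    (p = 2 → d = -1 → j = 0 → 0 < i → phiZ p n d (PelZ p n i j) = 0) ∧
    (∀ v : ℕ, p = 2 → 2 ≤ v → d ∈ negUset p v → d ∉ negUset p (v + 1) → j = 0 → 0 < i →
      (2 : ℤ) ^ (i + v) ∣ (phiZ p n d (PelZ p n i j) - 2 ^ (i + v - 1))) := by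
  have hfor := phiZ_PelZ p n hp i j hji hin d
  obtain ⟨k0, hk0⟩ := hd
  have hd1 : (p:ℤ) ∣ d - 1 := ⟨k0, by rw [hk0]; push_cast; ring⟩
  have he1 : (p:ℤ) ∣ d ^ p ^ j - 1 := dvd_pow_sub_one' hd1 (p ^ j)
  refine ⟨?_, ?_, ?_, ?_⟩
  · -- part 1
    rcases hp.eq_two_or_odd' with hp2 | ho
    · subst hp2
      by_cases h4 : (4:ℤ) ∣ d ^ 2 ^ j - 1
      · have hmain := geom_main 2 hp _ he1 (Or.inr h4) (i - j)
        rw [hfor]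
        have h1 : ((2:ℕ):ℤ)^(i-j) ∣ (∑ k ∈ Finset.range (2 ^ (i - j)), (d ^ 2 ^ j) ^ k)
            - ((2:ℕ):ℤ)^(i-j) := dvd_trans (pow_dvd_pow _ (Nat.le_succ _)) hmain
        simpa using dvd_add h1 ⟨1, (mul_one _).symm⟩
      · have hdodd : Odd d := ⟨k0, by rw [hk0]; push_cast; ring⟩
        have hj0 : j = 0 := by
          by_contra hj
          apply h4
          have hje : (2:ℕ) ^ j = 2 ^ (j - 1) * 2 := by
            rw [← pow_succ]
            congr 1
            omega
          have : d ^ 2 ^ j = (d ^ 2 ^ (j - 1)) ^ 2 := by rw [hje, pow_mul]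
          rw [this]
          exact four_dvd_sq_sub_one hdodd.pow
        subst hj0
        rcases Nat.eq_zero_or_pos i with hi0 | hipos
        · subst hi0
          simp
        · have h4sq : (4:ℤ) ∣ d ^ 2 - 1 := four_dvd_sq_sub_one hdodd
          have h2sq : ((2:ℕ):ℤ) ∣ d ^ 2 - 1 := dvd_trans (by norm_num) h4sq
          have hmain := geom_main 2 hp (d ^ 2) h2sq (Or.inr h4sq) (i - 1)
          have hT : ((2:ℕ):ℤ)^(i-1) ∣ ∑ l ∈ Finset.range (2 ^ (i-1)), (d ^ 2) ^ l := by
            have h1 : ((2:ℕ):ℤ)^(i-1) ∣ (∑ l ∈ Finset.range (2 ^ (i-1)), (d ^ 2) ^ l)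
                - ((2:ℕ):ℤ)^(i-1) := dvd_trans (pow_dvd_pow _ (Nat.le_succ _)) hmain
            simpa using dvd_add h1 ⟨1, (mul_one _).symm⟩
          have h1d : ((2:ℕ):ℤ) ∣ (1 + d) := by
            obtain ⟨c, hc⟩ := hdodd
            exact ⟨c + 1, by rw [hc]; push_cast; ring⟩
          have hie : (2:ℕ) ^ i = 2 * 2 ^ (i - 1) := by
            rw [← pow_succ']
            congr 1
            omega
          have hsplit : ∑ k ∈ Finset.range (2 ^ i), d ^ k
              = (1 + d) * ∑ l ∈ Finset.range (2 ^ (i-1)), (d ^ 2) ^ l := by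
            rw [hie, geom_split]
            congr 1
            simp [Finset.sum_range_succ]
          rw [hfor]
          simp only [Nat.sub_zero, pow_zero, pow_one]
          rw [hsplit]
          have := mul_dvd_mul h1d hT
          rwa [← pow_succ', show (i-1) + 1 = i by omega] at this
    · have hmain := geom_main p hp _ he1 (Or.inl ho) (i - j)
      rw [hfor]
      have h1 : ((p:ℕ):ℤ)^(i-j) ∣ (∑ k ∈ Finset.range (p ^ (i - j)), (d ^ p ^ j) ^ k)
          - ((p:ℕ):ℤ)^(i-j) := dvd_trans (pow_dvd_pow _ (Nat.le_succ _)) hmain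
      simpa using dvd_add h1 ⟨1, (mul_one _).symm⟩
  · -- part 2
    intro hcond _
    have hGE : Odd p ∨ (4:ℤ) ∣ d ^ p ^ j - 1 := by
      rcases hp.eq_two_or_odd' with hp2 | ho
      · right
        subst hp2
        rcases hcond with h | h | h
        · omega
        · obtain ⟨c, hc⟩ := h
          exact dvd_pow_sub_one' ⟨c, by rw [hc]; push_cast; ring⟩ (2 ^ j)
        · have hdodd : Odd d := ⟨k0, by rw [hk0]; push_cast; ring⟩
          have hje : (2:ℕ) ^ j = 2 ^ (j - 1) * 2 := by
            rw [← pow_succ]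
            congr 1
            omega
          have hdd : d ^ 2 ^ j = (d ^ 2 ^ (j - 1)) ^ 2 := by rw [hje, pow_mul]
          rw [hdd]
          exact four_dvd_sq_sub_one hdodd.pow
      · exact Or.inl ho
    rw [hfor]
    exact geom_main p hp _ he1 hGE (i - j)
  · -- part 3
    intro hp2 hdneg hj0 hipos
    subst hp2
    subst hj0
    subst hdneg
    rw [hfor]
    simp only [pow_zero, pow_one, Nat.sub_zero]
    rw [neg_one_geom_sum, if_pos]
    exact (Nat.even_pow' hipos.ne').mpr even_two
  · -- part 4
    intro v hp2 hv hdv hdv1 hj0 hipos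
    subst hp2
    subst hj0
    obtain ⟨k, hk⟩ := hdv
    have hkodd : Odd k := by
      rcases Int.even_or_odd k with hke | hko
      · exfalso
        obtain ⟨k', hk'⟩ := hke
        exact hdv1 ⟨k', by rw [hk, hk']; push_cast; ring⟩
      · exact hko
    have hdodd : Odd d := ⟨k0, by rw [hk0]; push_cast; ring⟩
    have h4sq : (4:ℤ) ∣ d ^ 2 - 1 := four_dvd_sq_sub_one hdodd
    have h2sq : ((2:ℕ):ℤ) ∣ d ^ 2 - 1 := dvd_trans (by norm_num) h4sq
    have hmain := geom_main 2 hp (d ^ 2) h2sq (Or.inr h4sq) (i - 1)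
    obtain ⟨A, hA⟩ := hmain
    have hie : (2:ℕ) ^ i = 2 * 2 ^ (i - 1) := by
      rw [← pow_succ']
      congr 1
      omega
    have hsplit : ∑ m ∈ Finset.range (2 ^ i), d ^ m
        = (1 + d) * ∑ l ∈ Finset.range (2 ^ (i-1)), (d ^ 2) ^ l := by
      rw [hie, geom_split]
      congr 1
      simp [Finset.sum_range_succ]
    rw [hfor]
    simp only [Nat.sub_zero, pow_zero, pow_one]
    rw [hsplit]
    have h1d : 1 + d = -(2:ℤ) ^ v * k := by
      have : -d = 1 + ((2:ℕ):ℤ) ^ v * k := hk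
      push_cast at this
      linarith
    obtain ⟨c, hc⟩ := hkodd
    have hTval : (∑ l ∈ Finset.range (2 ^ (i-1)), (d ^ 2) ^ l)
        = ((2:ℕ):ℤ) ^ ((i-1)+1) * A + ((2:ℕ):ℤ) ^ (i-1) := by linarith
    rw [h1d, hTval]
    have hi1 : i + v - 1 = (i - 1) + v := by omega
    have hi2 : i + v = (i - 1) + v + 1 := by omega
    rw [hi1, hi2]
    push_cast
    exact ⟨-k * A - (c + 1), by rw [hc]; ring⟩
end

section
/- For m ∈ ℕ, 0 ≤ k ≤ m, and 0 ≤ j < i ≤ n, one has ⟨P(i,j)⟩ ∩ ⟨p^k⟩ = ⟨p^k P(i,j)⟩ as ideals in R_mG_i. -/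
open scoped BigOperators

lemma sg_pow (p m n v : ℕ) :
    sg p m n ^ v = MonoidAlgebra.single (Multiplicative.ofAdd ((v : ZMod (p ^ n)))) 1 := by
  rw [sg, ← map_pow]
  rw [← ofAdd_nsmul]
  simp [nsmul_eq_mul]

lemma sg_pow_self (p m n : ℕ) : sg p m n ^ (p ^ n) = 1 := by
  rw [sg_pow]
  simp [MonoidAlgebra.one_def]

lemma z_mul_Pel (p m i j : ℕ) (hji : j ≤ i) :
    sg p m i ^ (p ^ j) * Pel p m i i j = Pel p m i i j := by
  have hz : (sg p m i ^ (p ^ j)) ^ (p ^ (i - j)) = 1 := by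
    rw [← pow_mul, ← pow_add, Nat.add_sub_cancel' hji, sg_pow_self]
  have hP : Pel p m i i j = ∑ t ∈ Finset.range (p ^ (i - j)), (sg p m i ^ (p ^ j)) ^ t := by
    simp [Pel, ← pow_mul, mul_comm]
  rw [hP, Finset.mul_sum]
  simp_rw [← pow_succ']
  have h1 := Finset.sum_range_succ' (fun x => (sg p m i ^ p ^ j) ^ x) (p ^ (i - j))
  have h2 := Finset.sum_range_succ (fun x => (sg p m i ^ p ^ j) ^ x) (p ^ (i - j))
  rw [h2, hz] at h1
  have := h1.symm
  rw [pow_zero] at this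
  exact add_right_cancel this

lemma zpow_mul_Pel (p m i j : ℕ) (hji : j ≤ i) (q : ℕ) :
    sg p m i ^ (q * p ^ j) * Pel p m i i j = Pel p m i i j := by
  induction q with
  | zero => simp
  | succ q ih =>
      rw [add_mul, one_mul, pow_add, mul_assoc, z_mul_Pel p m i j hji, ih]

lemma sg_pow_mod_mul_Pel (p m i j : ℕ) (hji : j ≤ i) (u : ℕ) :
    sg p m i ^ u * Pel p m i i j = sg p m i ^ (u % p ^ j) * Pel p m i i j := by
  conv_lhs => rw [← Nat.div_add_mod u (p ^ j), mul_comm (p ^ j) (u / p ^ j)]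
  rw [pow_add, mul_comm (sg p m i ^ (u / p ^ j * p ^ j)) (sg p m i ^ (u % p ^ j)),
    mul_assoc, zpow_mul_Pel p m i j hji]

lemma of_eq_sg_pow (p m i : ℕ) [NeZero (p ^ i)] (g : Cyc p i) :
    MonoidAlgebra.of (Rm p m) (Cyc p i) g = sg p m i ^ (Multiplicative.toAdd g).val := by
  rw [sg_pow]
  simp [MonoidAlgebra.of_apply, ZMod.natCast_val, ZMod.cast_id']

lemma mul_Pel_mem_span (p m i j : ℕ) (hp : 0 < p) (hji : j ≤ i) [NeZero (p ^ i)] (f : RG p m i) :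
    f * Pel p m i i j ∈ Submodule.span (Rm p m)
      (Set.range (fun s : Fin (p ^ j) => sg p m i ^ (s : ℕ) * Pel p m i i j)) := by
  induction f using MonoidAlgebra.induction with
  | zero => simp
  | single_add g r f _ _ ih =>
      rw [add_mul]
      refine Submodule.add_mem _ ?_ ih
      have h1 : MonoidAlgebra.single g r = r • (MonoidAlgebra.of (Rm p m) (Cyc p i) g) := by
        simp [MonoidAlgebra.of_apply, MonoidAlgebra.smul_single']
      rw [h1, smul_mul_assoc, of_eq_sg_pow, sg_pow_mod_mul_Pel p m i j hji]
      refine Submodule.smul_mem _ _ (Submodule.subset_span ?_)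
      exact ⟨⟨(Multiplicative.toAdd g).val % p ^ j,
        Nat.mod_lt _ (pow_pos hp j)⟩, rfl⟩

lemma coeff_sum (p m i j : ℕ) (hp : 0 < p) (hji : j ≤ i) [NeZero (p ^ i)]
    (c : Fin (p ^ j) → Rm p m) (s₀ : Fin (p ^ j)) :
    (∑ s : Fin (p ^ j), c s • (sg p m i ^ (s : ℕ) * Pel p m i i j)).coeff
      (Multiplicative.ofAdd (((s₀ : ℕ) : ZMod (p ^ i)))) = c s₀ := by
  have hNp : p ^ j * p ^ (i - j) = p ^ i := by rw [← pow_add, Nat.add_sub_cancel' hji]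
  have hterm : ∀ s : Fin (p ^ j), c s • (sg p m i ^ (s : ℕ) * Pel p m i i j) =
      ∑ t ∈ Finset.range (p ^ (i - j)),
        MonoidAlgebra.single (Multiplicative.ofAdd ((((s : ℕ) + t * p ^ j : ℕ)) : ZMod (p ^ i))) (c s) := by
    intro s
    rw [Pel, Finset.mul_sum, Finset.smul_sum]
    refine Finset.sum_congr rfl fun t _ => ?_
    rw [← pow_add, sg_pow, MonoidAlgebra.smul_single']
    simp
  simp_rw [hterm]
  rw [MonoidAlgebra.coeff_sum, Finsupp.finset_sum_apply]
  simp_rw [MonoidAlgebra.coeff_sum, Finsupp.finset_sum_apply, MonoidAlgebra.coeff_single, Finsupp.single_apply]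
  have hcond : ∀ (s : Fin (p ^ j)), ∀ t ∈ Finset.range (p ^ (i - j)),
      (Multiplicative.ofAdd ((((s : ℕ) + t * p ^ j : ℕ)) : ZMod (p ^ i))
        = Multiplicative.ofAdd (((s₀ : ℕ) : ZMod (p ^ i)))) ↔ (s = s₀ ∧ t = 0) := by
    intro s t ht
    rw [Finset.mem_range] at ht
    constructor
    · intro h
      have h' : (((s : ℕ) + t * p ^ j : ℕ) : ZMod (p ^ i)) = ((s₀ : ℕ) : ZMod (p ^ i)) :=
        Multiplicative.ofAdd.injective h
      have hlt1 : (s : ℕ) + t * p ^ j < p ^ i := by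
        have h1 : (s : ℕ) < p ^ j := s.isLt
        have h2 : t * p ^ j + p ^ j ≤ p ^ (i - j) * p ^ j := by
          have := Nat.succ_le_of_lt ht
          calc t * p ^ j + p ^ j = (t + 1) * p ^ j := by ring
          _ ≤ p ^ (i - j) * p ^ j := Nat.mul_le_mul_right _ this
        rw [mul_comm] at hNp
        omega
      have hlt2 : (s₀ : ℕ) < p ^ i := lt_of_lt_of_le s₀.isLt (Nat.pow_le_pow_right hp hji)
      have heq : (s : ℕ) + t * p ^ j = (s₀ : ℕ) := by
        have := congrArg ZMod.val h'
        rwa [ZMod.val_cast_of_lt hlt1, ZMod.val_cast_of_lt hlt2] at this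
      have ht0 : t = 0 := by
        by_contra h0
        have : p ^ j ≤ t * p ^ j := Nat.le_mul_of_pos_left _ (Nat.pos_of_ne_zero h0)
        have := s₀.isLt
        omega
      subst ht0
      simp only [Nat.zero_mul, Nat.add_zero] at heq
      exact ⟨Fin.ext heq, rfl⟩
    · rintro ⟨rfl, rfl⟩
      simp
  rw [Finset.sum_congr rfl fun s _ => Finset.sum_congr rfl fun t ht =>
    if_congr (hcond s t ht) rfl rfl]
  have hinner : ∀ s : Fin (p ^ j), ∑ t ∈ Finset.range (p ^ (i - j)),
      (if s = s₀ ∧ t = 0 then c s else 0) = if s = s₀ then c s else 0 := by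
    intro s
    by_cases hs : s = s₀
    · simp only [hs, true_and]
      rw [Finset.sum_ite_eq' (Finset.range (p ^ (i - j))) 0 (fun _ => c s₀)]
      simp [Finset.mem_range, pow_pos hp]
    · simp [hs]
  simp_rw [hinner]
  simp

/-- Lemma 2.4 (`le:separate`). -/
theorem span_P_inter_span_pk (p n m : ℕ) (hp : p.Prime) (hm : 1 ≤ m)
    (k : ℕ) (hk : k ≤ m) (i j : ℕ) (hji : j < i) (hin : i ≤ n) :
    Ideal.span {Pel p m i i j} ⊓ Ideal.span {(p : RG p m i) ^ k} =
      Ideal.span {(p : RG p m i) ^ k * Pel p m i i j} := by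
  haveI : NeZero (p ^ i) := ⟨pow_ne_zero i hp.ne_zero⟩
  have hp0 : 0 < p := hp.pos
  have hji' : j ≤ i := hji.le
  have hpk : ∀ y : RG p m i, (p : RG p m i) ^ k * y = ((p ^ k : ℕ) : Rm p m) • y := by
    intro y
    rw [Nat.cast_smul_eq_nsmul, nsmul_eq_mul, Nat.cast_pow]
  apply le_antisymm
  · rintro x ⟨hx1, hx2⟩
    obtain ⟨f, hf⟩ := Ideal.mem_span_singleton'.1 hx1
    obtain ⟨b, hb⟩ := Ideal.mem_span_singleton'.1 hx2
    have hxspan : x ∈ Submodule.span (Rm p m)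
        (Set.range (fun s : Fin (p ^ j) => sg p m i ^ (s : ℕ) * Pel p m i i j)) := by
      rw [← hf]; exact mul_Pel_mem_span p m i j hp0 hji' f
    obtain ⟨c, hc⟩ := (Submodule.mem_span_range_iff_exists_fun _).1 hxspan
    -- each coefficient c s is divisible by p^k
    have hcs : ∀ s : Fin (p ^ j),
        c s = ((p ^ k : ℕ) : Rm p m) * b.coeff (Multiplicative.ofAdd (((s : ℕ) : ZMod (p ^ i)))) := by
      intro s
      have h1 := coeff_sum p m i j hp0 hji' c s
      rw [hc] at h1
      rw [← h1, ← hb, mul_comm b, hpk, MonoidAlgebra.coeff_smul_apply, smul_eq_mul]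
    rw [Ideal.mem_span_singleton']
    refine ⟨∑ s : Fin (p ^ j),
      b.coeff (Multiplicative.ofAdd (((s : ℕ) : ZMod (p ^ i)))) • sg p m i ^ (s : ℕ), ?_⟩
    rw [Finset.sum_mul, ← hc]
    refine Finset.sum_congr rfl fun s _ => ?_
    rw [smul_mul_assoc, mul_left_comm, hpk, smul_comm, smul_smul, hcs]
  · rw [Ideal.span_le, Set.singleton_subset_iff]
    refine ⟨Ideal.mem_span_singleton'.2 ⟨(p : RG p m i) ^ k, rfl⟩,
      Ideal.mem_span_singleton'.2 ⟨Pel p m i i j, mul_comm _ _⟩⟩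
end

section
/- Suppose m ≥ 2, 0 ≤ i ≤ n, and t ∈ ℕ ∪ {0}. Let (b_j)_{j=0}^t be a decreasing sequence of elements of {0,…,m−2} and (c_j)_{j=0}^t an increasing sequence of elements of {−∞,0,…,i−1}, and assume t > 0 when c_0 = −∞. Assume additionally: (1) d^{p^i} ∈ U_m; (2) b_t = 0; (3) φ_d^{(m)}(P(i,c_j)) ∈ p^{1+b_{j−1}}R_m for all 0 < j ≤ t with c_j ≠ −∞, and φ_d^{(m)}(P(i,c_0)) = 0 if c_0 ≠ −∞. For r ∈ R_mG_i, suppose the image of (σ−d)r in R_{m−1}G_i lies in ann_{R_{m−1}G_i}⟨p^{b_0}, {p^{b_j}(σ^{p^{c_j}}−1)}_{j=1}^t⟩ if c_0 = −∞, respectively in ann_{R_{m−1}G_i}⟨{p^{b_j}(σ^{p^{c_j}}−1)}_{j=0}^t⟩ if c_0 ≠ −∞. Then, in R_mG_i, (σ−d)r lies in the ideal ⟨p^{m−1−b_0}P(i,c_1),…,p^{m−1−b_{t−1}}P(i,c_t), p^{m−1}(σ−d)⟩ if c_0 = −∞, respectively in ⟨P(i,c_0), p^{m−1−b_0}P(i,c_1),…,p^{m−1−b_{t−1}}P(i,c_t),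 p^{m−1}(σ−d)⟩ if c_0 ≠ −∞. -/
open scoped BigOperators

namespace TechAux

open Polynomial MonoidAlgebra

variable {p : ℕ}

lemma sg_pow (m i t : ℕ) :
    sg p m i ^ t = MonoidAlgebra.of (Rm p m) (Cyc p i)
      (Multiplicative.ofAdd ((t : ZMod (p ^ i)))) := by
  rw [sg, ← map_pow]
  congr 1
  rw [← ofAdd_nsmul]
  congr 1
  simp

lemma sg_pow_card (hp : p.Prime) (m i : ℕ) : sg p m i ^ (p ^ i) = 1 := by
  rw [sg_pow]
  simp [MonoidAlgebra.one_def]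

lemma exists_poly (hp : p.Prime) (m i : ℕ) (τ : RG p m i) :
    ∃ F : Polynomial (Rm p m), Polynomial.aeval (sg p m i) F = τ := by
  haveI : NeZero (p ^ i) := ⟨pow_ne_zero _ hp.ne_zero⟩
  refine ⟨τ.coeff.sum fun a r => Polynomial.C r * Polynomial.X ^ (Multiplicative.toAdd a).val, ?_⟩
  rw [map_finsuppSum]
  conv_rhs => rw [← τ.sum_coeff_single]
  refine Finsupp.sum_congr fun a _ => ?_
  rw [map_mul, Polynomial.aeval_C, map_pow, Polynomial.aeval_X, sg_pow,
    ZMod.natCast_rightInverse _]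
  rw [MonoidAlgebra.of_apply]
  have : (algebraMap (Rm p m) (RG p m i)) (τ.coeff a) = MonoidAlgebra.single 1 (τ.coeff a) := by
    rw [MonoidAlgebra.coe_algebraMap]; simp
  rw [this, MonoidAlgebra.single_mul_single, one_mul, mul_one]
  simp

lemma coeff_eq_zero (hp : p.Prime) {m i : ℕ} {F : Polynomial (Rm p m)}
    (hdeg : F.natDegree < p ^ i)
    (h : Polynomial.aeval (sg p m i) F = 0) : F = 0 := by
  haveI : NeZero (p ^ i) := ⟨pow_ne_zero _ hp.ne_zero⟩
  rw [Polynomial.aeval_eq_sum_range' hdeg] at h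
  have hsg : ∀ t : ℕ, F.coeff t • sg p m i ^ t =
      MonoidAlgebra.single (Multiplicative.ofAdd ((t : ZMod (p ^ i)))) (F.coeff t) := by
    intro t
    rw [sg_pow, MonoidAlgebra.of_apply, MonoidAlgebra.smul_single]
    simp
  simp only [hsg] at h
  ext t
  simp only [Polynomial.coeff_zero]
  by_cases htlt : t < p ^ i
  · have := congrArg (fun f => f.coeff (Multiplicative.ofAdd ((t : ZMod (p ^ i))))) h
    simp only [MonoidAlgebra.coeff_sum, MonoidAlgebra.coeff_single, MonoidAlgebra.coeff_zero,
      Finsupp.coe_zero, Pi.zero_apply] at this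
    rw [Finsupp.finset_sum_apply] at this
    rw [Finset.sum_eq_single t] at this
    · rwa [Finsupp.single_apply, if_pos rfl] at this
    · intro s hs hst
      rw [Finsupp.single_apply, if_neg]
      intro hcontra
      apply hst
      have : ((s : ZMod (p ^ i))) = ((t : ZMod (p ^ i))) := by
        exact Multiplicative.ofAdd.injective hcontra
      have := congrArg ZMod.val this
      rwa [ZMod.val_natCast_of_lt (Finset.mem_range.mp hs),
        ZMod.val_natCast_of_lt htlt] at this
    · intro ht; exact absurd (Finset.mem_range.mpr htlt) ht
  · exact Polynomial.coeff_eq_zero_of_natDegree_lt (lt_of_lt_of_le hdeg (le_of_not_gt htlt))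

lemma dvd_of_aeval_eq_zero (hp : p.Prime) {m i : ℕ} (hm : 1 ≤ m) {F : Polynomial (Rm p m)}
    (h : Polynomial.aeval (sg p m i) F = 0) :
    (Polynomial.X ^ (p ^ i) - 1 : Polynomial (Rm p m)) ∣ F := by
  haveI : Fact (1 < p ^ m) := ⟨Nat.one_lt_pow (by omega) hp.one_lt⟩
  have hmonic : (Polynomial.X ^ (p ^ i) - 1 : Polynomial (Rm p m)).Monic := by
    have := Polynomial.monic_X_pow_sub_C (1 : Rm p m) (pow_ne_zero i hp.ne_zero)
    simpa using this
  rw [← Polynomial.modByMonic_eq_zero_iff_dvd hmonic]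
  have hdiv := Polynomial.modByMonic_add_div F (Polynomial.X ^ (p ^ i) - 1 : Polynomial (Rm p m))
  have haevalq : Polynomial.aeval (sg p m i) (Polynomial.X ^ (p ^ i) - 1 : Polynomial (Rm p m)) = 0 := by
    rw [map_sub, map_pow, Polynomial.aeval_X, map_one, sg_pow_card hp, sub_self]
  have h0 : Polynomial.aeval (sg p m i) (F %ₘ (Polynomial.X ^ (p ^ i) - 1)) = 0 := by
    have := congrArg (Polynomial.aeval (sg p m i)) hdiv
    rw [map_add, map_mul, haevalq, zero_mul, add_zero] at this
    rw [this, h]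
  have hdeg : (F %ₘ (Polynomial.X ^ (p ^ i) - 1)).natDegree < p ^ i := by
    have hlt := Polynomial.degree_modByMonic_lt F hmonic
    have hdegq : (Polynomial.X ^ (p ^ i) - 1 : Polynomial (Rm p m)).degree = (p ^ i : ℕ) := by
      have : (Polynomial.X ^ (p ^ i) - 1 : Polynomial (Rm p m)) =
          Polynomial.X ^ (p ^ i) - Polynomial.C 1 := by simp
      rw [this, Polynomial.degree_X_pow_sub_C (pow_pos hp.pos i)]
    rw [hdegq] at hlt
    by_cases h0' : F %ₘ (Polynomial.X ^ (p ^ i) - 1) = 0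
    · rw [h0']; simpa using pow_pos hp.pos i
    · exact (Polynomial.natDegree_lt_iff_degree_lt h0').mpr hlt
  exact coeff_eq_zero hp hdeg h0

lemma pel_factor (m i c : ℕ) (hci : c ≤ i) :
    (Polynomial.X ^ (p ^ c) - 1 : Polynomial (Rm p m)) *
      (∑ k ∈ Finset.range (p ^ (i - c)), Polynomial.X ^ (k * p ^ c)) =
    Polynomial.X ^ (p ^ i) - 1 := by
  have hsum : (∑ k ∈ Finset.range (p ^ (i - c)), (Polynomial.X : Polynomial (Rm p m)) ^ (k * p ^ c)) =
      ∑ k ∈ Finset.range (p ^ (i - c)), ((Polynomial.X : Polynomial (Rm p m)) ^ (p ^ c)) ^ k := by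
    refine Finset.sum_congr rfl fun k _ => ?_
    rw [← pow_mul, mul_comm]
  rw [hsum, mul_comm, geom_sum_mul, ← pow_mul, ← pow_add, Nat.add_sub_cancel' hci]

lemma pel_aeval (m i c : ℕ) :
    Polynomial.aeval (sg p m i)
      (∑ k ∈ Finset.range (p ^ (i - c)), (Polynomial.X : Polynomial (Rm p m)) ^ (k * p ^ c)) =
    Pel p m i i c := by
  rw [map_sum, Pel]
  refine Finset.sum_congr rfl fun k _ => ?_
  rw [map_pow, Polynomial.aeval_X]

lemma ann_pel (hp : p.Prime) {m i : ℕ} (hm : 1 ≤ m) (c : ℕ) (hci : c ≤ i) (τ : RG p m i)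
    (h : (sg p m i ^ (p ^ c) - 1) * τ = 0) : ∃ u, τ = Pel p m i i c * u := by
  obtain ⟨F, hF⟩ := exists_poly hp m i τ
  have h0 : Polynomial.aeval (sg p m i) ((Polynomial.X ^ (p ^ c) - 1) * F) = 0 := by
    rw [map_mul, map_sub, map_pow, Polynomial.aeval_X, map_one, hF]
    exact h
  obtain ⟨G, hG⟩ := dvd_of_aeval_eq_zero hp hm h0
  rw [← pel_factor m i c hci, mul_assoc] at hG
  have hmonic : (Polynomial.X ^ (p ^ c) - 1 : Polynomial (Rm p m)).Monic := by
    have := Polynomial.monic_X_pow_sub_C (1 : Rm p m) (pow_ne_zero c hp.ne_zero)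
    simpa using this
  have hFG := hmonic.isRegular.left hG
  refine ⟨Polynomial.aeval (sg p m i) G, ?_⟩
  rw [← hF, hFG, map_mul, pel_aeval]

lemma mul_pow_fixed {A : Type*} [CommRing A] {x P : A} (h : x * P = P) (n : ℕ) :
    x ^ n * P = P := by
  induction n with
  | zero => rw [pow_zero, one_mul]
  | succ n ih => rw [pow_succ, mul_assoc, h, ih]

lemma sg_mul_pel (hp : p.Prime) (m i c : ℕ) (hci : c ≤ i) :
    sg p m i ^ (p ^ c) * Pel p m i i c = Pel p m i i c := by
  unfold Pel
  rw [Finset.mul_sum]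
  have hterm : ∀ k : ℕ, sg p m i ^ (p ^ c) * sg p m i ^ (k * p ^ c) =
      sg p m i ^ ((k + 1) * p ^ c) := by
    intro k
    rw [← pow_add]
    congr 1
    ring
  simp only [hterm]
  have hK : sg p m i ^ (p ^ (i - c) * p ^ c) = 1 := by
    rw [← pow_add, Nat.sub_add_cancel hci, sg_pow_card hp]
  have h1 := Finset.sum_range_succ' (fun x => sg p m i ^ (x * p ^ c)) (p ^ (i - c))
  have h2 := Finset.sum_range_succ (fun x => sg p m i ^ (x * p ^ c)) (p ^ (i - c))
  simp only [zero_mul, pow_zero] at h1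
  rw [hK] at h2
  linear_combination h2 - h1

lemma sg_pow_mul_pel (hp : p.Prime) (m i c c' : ℕ) (hci : c ≤ i) (hcc : c ≤ c') :
    sg p m i ^ (p ^ c') * Pel p m i i c = Pel p m i i c := by
  have hexp : sg p m i ^ (p ^ c') = (sg p m i ^ (p ^ c)) ^ (p ^ (c' - c)) := by
    rw [← pow_mul, ← pow_add, Nat.add_sub_cancel' hcc]
  rw [hexp]
  exact mul_pow_fixed (sg_mul_pel hp m i c hci) _

lemma sg_sub_one_mul_pel (hp : p.Prime) (m i c c' : ℕ) (hci : c ≤ i) (hcc : c ≤ c') :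
    (sg p m i ^ (p ^ c') - 1) * Pel p m i i c = 0 := by
  rw [sub_mul, one_mul, sg_pow_mul_pel hp m i c c' hci hcc, sub_self]

noncomputable def redHom (p m δ i : ℕ) (h : δ ≤ m) : RG p m i →+* RG p δ i :=
  MonoidAlgebra.liftNCRingHom
    ((MonoidAlgebra.singleOneRingHom).comp (ZMod.castHom (pow_dvd_pow p h) (ZMod (p ^ δ))))
    (MonoidAlgebra.of (Rm p δ) (Cyc p i))
    (fun _ _ => Commute.all _ _)

lemma redHom_single {m δ i : ℕ} (h : δ ≤ m) (a : Cyc p i) (b₀ : Rm p m) :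
    redHom p m δ i h (MonoidAlgebra.single a b₀) =
      MonoidAlgebra.single a (ZMod.castHom (pow_dvd_pow p h) (ZMod (p ^ δ)) b₀) := by
  rw [redHom, MonoidAlgebra.liftNCRingHom]
  show MonoidAlgebra.liftNC _ _ (MonoidAlgebra.single a b₀) = _
  rw [MonoidAlgebra.liftNC_single]
  show MonoidAlgebra.singleOneRingHom _ * MonoidAlgebra.of _ _ a = _
  rw [MonoidAlgebra.singleOneRingHom]
  show MonoidAlgebra.single 1 _ * MonoidAlgebra.single a 1 = _
  rw [MonoidAlgebra.single_mul_single, one_mul, mul_one]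

lemma redHom_eq_mapRange {m δ i : ℕ} (h : δ ≤ m) (f : RG p m i) :
    redHom p m δ i h f =
      MonoidAlgebra.ofCoeff
        (Finsupp.mapRange (ZMod.castHom (pow_dvd_pow p h) (ZMod (p ^ δ))) (map_zero _) f.coeff) := by
  induction f using MonoidAlgebra.induction_linear with
  | zero => simp [map_zero]
  | add f g hf hg => rw [map_add, hf, hg, MonoidAlgebra.coeff_add,
      Finsupp.mapRange_add (map_add _), MonoidAlgebra.ofCoeff_add]
  | single a b₀ => rw [redHom_single, MonoidAlgebra.coeff_single, Finsupp.mapRange_single,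
      MonoidAlgebra.ofCoeff_single]

lemma barMap_eq_redHom (m i : ℕ) (f : RG p m i) :
    barMap p m i f = redHom p m (m - 1) i (Nat.sub_le m 1) f := by
  rw [redHom_eq_mapRange, barMap]

lemma redHom_sg {m δ i : ℕ} (h : δ ≤ m) : redHom p m δ i h (sg p m i) = sg p δ i := by
  rw [sg, MonoidAlgebra.of_apply, redHom_single]
  rw [sg, MonoidAlgebra.of_apply]
  congr 1
  exact RingHom.map_one _

lemma redHom_surj {m δ i : ℕ} (hp : p.Prime) (h : δ ≤ m) (z : RG p δ i) :
    ∃ w : RG p m i, redHom p m δ i h w = z := by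
  haveI : NeZero (p ^ δ) := ⟨pow_ne_zero _ hp.ne_zero⟩
  refine ⟨MonoidAlgebra.ofCoeff (Finsupp.mapRange (fun x : ZMod (p ^ δ) => ((x.val : ℕ) : ZMod (p ^ m)))
    (by simp) z.coeff), ?_⟩
  rw [redHom_eq_mapRange]
  ext g
  simp only [MonoidAlgebra.coeff_ofCoeff, Finsupp.mapRange_apply, map_natCast]
  exact ZMod.natCast_rightInverse (z.coeff g)

lemma zmod_cast_eq_zero {m δ : ℕ} (hδm : δ ≤ m) (x : ZMod (p ^ m))
    (h : ZMod.castHom (pow_dvd_pow p hδm) (ZMod (p ^ δ)) x = 0) :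
    ∃ x', x = (p : ZMod (p ^ m)) ^ δ * x' := by
  obtain ⟨X, rfl⟩ := ZMod.intCast_surjective x
  rw [map_intCast, ZMod.intCast_zmod_eq_zero_iff_dvd] at h
  obtain ⟨Y, hY⟩ := h
  refine ⟨((Y : ℤ) : ZMod (p ^ m)), ?_⟩
  rw [hY]
  push_cast
  ring

lemma single_one_pow (m i δ : ℕ) :
    (p : RG p m i) ^ δ = MonoidAlgebra.single 1 ((p : Rm p m) ^ δ) := by
  have h1 : ((p : Rm p m) ^ δ : Rm p m) = algebraMap (Rm p m) (Rm p m) ((p : Rm p m) ^ δ) := by simp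
  have : (p : RG p m i) ^ δ = algebraMap (Rm p m) (RG p m i) ((p : Rm p m) ^ δ) := by
    rw [map_pow, map_natCast]
  rw [this, MonoidAlgebra.coe_algebraMap]
  simp

lemma coeff_div {m i : ℕ} (r : Rm p m) (f : RG p m i) (h : ∀ g, ∃ w, f.coeff g = r * w) :
    ∃ h', f = MonoidAlgebra.single (1 : Cyc p i) r * h' := by
  choose w hw using h
  refine ⟨∑ a ∈ f.coeff.support, MonoidAlgebra.single a (w a), ?_⟩
  rw [Finset.mul_sum]
  conv_lhs => rw [← MonoidAlgebra.sum_coeff_single f]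
  rw [Finsupp.sum]
  refine Finset.sum_congr rfl fun a _ => ?_
  rw [MonoidAlgebra.single_mul_single, one_mul, ← hw]

lemma redHom_eq_zero {m δ i : ℕ} (hδm : δ ≤ m) (z : RG p m i)
    (h : redHom p m δ i hδm z = 0) : ∃ w, z = (p : RG p m i) ^ δ * w := by
  rw [single_one_pow]
  refine coeff_div _ _ fun g => ?_
  apply zmod_cast_eq_zero hδm
  rw [redHom_eq_mapRange] at h
  have := congrArg (fun f => f.coeff g) h
  simpa [MonoidAlgebra.coeff_ofCoeff, Finsupp.mapRange_apply] using this

lemma zmod_div (hp : p.Prime) {m a e : ℕ} (hae : a ≤ e) (hem : e ≤ m) (x y : ZMod (p ^ m))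
    (h : (p : ZMod (p ^ m)) ^ a * x = (p : ZMod (p ^ m)) ^ e * y) :
    ∃ x', x = (p : ZMod (p ^ m)) ^ (e - a) * x' := by
  obtain ⟨X, rfl⟩ := ZMod.intCast_surjective x
  obtain ⟨Y, rfl⟩ := ZMod.intCast_surjective y
  have h0 : (((p : ℤ) ^ a * X - (p : ℤ) ^ e * Y : ℤ) : ZMod (p ^ m)) = 0 := by
    push_cast
    rw [sub_eq_zero]
    exact h
  rw [ZMod.intCast_zmod_eq_zero_iff_dvd] at h0
  obtain ⟨Z, hZ⟩ := h0
  have hX : X = (p : ℤ) ^ (e - a) * (Y + (p : ℤ) ^ (m - e) * Z) := by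
    have hpne : ((p : ℤ) ^ a) ≠ 0 := pow_ne_zero _ (by exact_mod_cast hp.ne_zero)
    apply mul_left_cancel₀ hpne
    have e1 : (p : ℤ) ^ a * ((p : ℤ) ^ (e - a) * (Y + (p : ℤ) ^ (m - e) * Z)) =
        (p : ℤ) ^ e * Y + (p : ℤ) ^ m * Z := by
      rw [← mul_assoc, ← pow_add]
      have : a + (e - a) = e := by omega
      rw [this, mul_add, ← mul_assoc, ← pow_add]
      have : e + (m - e) = m := by omega
      rw [this]
    rw [e1]
    push_cast at hZ
    linarith [hZ]
  refine ⟨(((Y + (p : ℤ) ^ (m - e) * Z) : ℤ) : ZMod (p ^ m)), ?_⟩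
  rw [hX]
  push_cast
  ring

lemma pow_p_div (hp : p.Prime) {m i a e : ℕ} (hae : a ≤ e) (hem : e ≤ m) (f y : RG p m i)
    (h : (p : RG p m i) ^ a * f = (p : RG p m i) ^ e * y) :
    ∃ h', f = (p : RG p m i) ^ (e - a) * h' := by
  rw [single_one_pow]
  refine coeff_div _ _ fun g => ?_
  apply zmod_div hp hae hem (f.coeff g) (y.coeff g)
  have := congrArg (fun z => z.coeff g) h
  simpa only [single_one_pow, MonoidAlgebra.coeff_single_one_mul] using this

lemma p_pow_m_zero (m i : ℕ) : (p : RG p m i) ^ m = 0 := by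
  have h1 : ((p ^ m : ℕ) : Rm p m) = 0 := by
    exact_mod_cast ZMod.natCast_self (p ^ m)
  have : (p : RG p m i) ^ m = algebraMap (Rm p m) (RG p m i) ((p ^ m : ℕ) : Rm p m) := by
    rw [map_natCast]
    push_cast
    ring
  rw [this, h1, map_zero]

lemma p_pow_m_zero_R (m : ℕ) : (p : Rm p m) ^ m = 0 := by
  have h1 : ((p ^ m : ℕ) : Rm p m) = 0 := ZMod.natCast_self (p ^ m)
  push_cast at h1
  exact h1

noncomputable def psiMonoidHom (p m i : ℕ) (d : ℤ) [NeZero (p ^ i)]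
    (hd : (d : Rm p m) ^ (p ^ i) = 1) : Cyc p i →* Rm p m where
  toFun g := (d : Rm p m) ^ (Multiplicative.toAdd g).val
  map_one' := by simp
  map_mul' a b := by
    have key : ∀ k : ℕ, (d : Rm p m) ^ (k % p ^ i) = (d : Rm p m) ^ k := by
      intro k
      conv_rhs => rw [← Nat.div_add_mod k (p ^ i)]
      rw [pow_add, pow_mul, hd, one_pow, one_mul]
    show (d : Rm p m) ^ (Multiplicative.toAdd (a * b)).val = _
    rw [toAdd_mul, ZMod.val_add, key, pow_add]

noncomputable def psiHom (p m i : ℕ) (d : ℤ) [NeZero (p ^ i)]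
    (hd : (d : Rm p m) ^ (p ^ i) = 1) : RG p m i →ₐ[Rm p m] Rm p m :=
  MonoidAlgebra.lift (Rm p m) (Rm p m) (Cyc p i) (psiMonoidHom p m i d hd)

lemma psi_sg (hp : p.Prime) {m i : ℕ} (hi : 1 ≤ i) (d : ℤ) [NeZero (p ^ i)]
    (hd : (d : Rm p m) ^ (p ^ i) = 1) :
    psiHom p m i d hd (sg p m i) = (d : Rm p m) := by
  rw [psiHom, sg, MonoidAlgebra.lift_of]
  show (d : Rm p m) ^ (Multiplicative.toAdd (Multiplicative.ofAdd (1 : ZMod (p ^ i)))).val = _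
  rw [toAdd_ofAdd]
  have h1 : (1 : ZMod (p ^ i)).val = 1 := by
    haveI : Fact (1 < p ^ i) := ⟨Nat.one_lt_pow (by omega) hp.one_lt⟩
    exact ZMod.val_one (p ^ i)
  rw [h1, pow_one]

lemma phiM_eq_psi (hp : p.Prime) {m i : ℕ} (d : ℤ) [NeZero (p ^ i)]
    (hd : (d : Rm p m) ^ (p ^ i) = 1) (f : RG p m i) :
    phiM p m i d f = psiHom p m i d hd f := by
  induction f using MonoidAlgebra.induction_linear with
  | zero => simp [phiM]
  | add f g hf hg =>
    rw [map_add, ← hf, ← hg, phiM, phiM, phiM, ← Finset.sum_add_distrib]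
    refine Finset.sum_congr rfl fun t _ => ?_
    rw [MonoidAlgebra.coeff_add, Finsupp.add_apply, add_mul]
  | single a b₀ =>
    rw [phiM]
    have hpsi : psiHom p m i d hd (MonoidAlgebra.single a b₀) =
        b₀ * (d : Rm p m) ^ (Multiplicative.toAdd a).val := by
      rw [psiHom, MonoidAlgebra.lift_single, smul_eq_mul]
      rfl
    rw [hpsi]
    rw [Finset.sum_eq_single ((Multiplicative.toAdd a).val)]
    · have hcond : Multiplicative.ofAdd (((Multiplicative.toAdd a).val : ℕ) : ZMod (p ^ i)) = a := by
        rw [ZMod.natCast_val, ZMod.cast_id]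
        simp
      rw [MonoidAlgebra.coeff_single, Finsupp.single_apply, if_pos hcond.symm]
    · intro s hs hst
      rw [MonoidAlgebra.coeff_single, Finsupp.single_apply, if_neg, zero_mul]
      intro hcontra
      apply hst
      have h2 : Multiplicative.toAdd a = ((s : ℕ) : ZMod (p ^ i)) := by
        have := congrArg Multiplicative.toAdd hcontra
        simpa using this
      have := congrArg ZMod.val h2
      rw [ZMod.val_natCast_of_lt (Finset.mem_range.mp hs)] at this
      omega
    · intro hnot
      exact absurd (Finset.mem_range.mpr (ZMod.val_lt _)) hnot

lemma sub_d_div (hp : p.Prime) {m i : ℕ} (hi : 1 ≤ i) (d : ℤ) [NeZero (p ^ i)]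
    (hd : (d : Rm p m) ^ (p ^ i) = 1) (τ : RG p m i) :
    ∃ w, τ = (sg p m i - (d : RG p m i)) * w +
      algebraMap (Rm p m) (RG p m i) (psiHom p m i d hd τ) := by
  obtain ⟨F, rfl⟩ := exists_poly hp m i τ
  obtain ⟨Q, hQ⟩ := Polynomial.X_sub_C_dvd_sub_C_eval (a := ((d : ℤ) : Rm p m)) (p := F)
  refine ⟨Polynomial.aeval (sg p m i) Q, ?_⟩
  have h2 : psiHom p m i d hd (Polynomial.aeval (sg p m i) F) =
      Polynomial.eval ((d : ℤ) : Rm p m) F := by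
    rw [← Polynomial.aeval_algHom_apply, psi_sg hp hi, ← Polynomial.coe_aeval_eq_eval]
  rw [h2]
  have h3 := congrArg (Polynomial.aeval (sg p m i)) hQ
  rw [map_sub, map_mul, map_sub, Polynomial.aeval_X, Polynomial.aeval_C,
    Polynomial.aeval_C, map_intCast] at h3
  linear_combination h3

lemma redHom_pel {m δ i : ℕ} (h : δ ≤ m) (ii c : ℕ) :
    redHom p m δ i h (Pel p m i ii c) = Pel p δ i ii c := by
  rw [Pel, Pel, map_sum]
  refine Finset.sum_congr rfl fun k _ => ?_
  rw [map_pow, redHom_sg]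

lemma core (hp : p.Prime) (m i t : ℕ) (hm : 2 ≤ m)
    (b : ℕ → ℕ) (cn : ℕ → ℕ)
    (hb : ∀ j ≤ t, b j ≤ m - 2)
    (hbanti : ∀ j k, j < k → k ≤ t → b k < b j)
    (hcn : ∀ j, 1 ≤ j → j ≤ t → cn j < i)
    (hcnmono : ∀ j k, 1 ≤ j → j ≤ k → k ≤ t → cn j ≤ cn k)
    (hbt : b t = 0) :
    ∀ k j, j + k = t → ∀ τ₀ : RG p m i,
    (∀ l, j < l → l ≤ t →
      ∃ w, (p : RG p m i) ^ (b l) * ((sg p m i ^ (p ^ cn l) - 1) *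
        ((p : RG p m i) ^ (m - 1 - b j) * τ₀)) = (p : RG p m i) ^ (m - 1) * w) →
    ∃ (α : ℕ → RG p m i) (τ : RG p m i),
      (p : RG p m i) ^ (m - 1 - b j) * τ₀ =
        (∑ l ∈ Finset.Ico j t,
          α l * ((p : RG p m i) ^ (m - 1 - b l) * Pel p m i i (cn (l + 1))))
          + (p : RG p m i) ^ (m - 1) * τ := by
  intro k
  induction k with
  | zero =>
    intro j hj τ₀ _
    have hjt : j = t := by omega
    subst hjt
    refine ⟨0, τ₀, ?_⟩
    simp [hbt]
  | succ k ih =>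
    intro j hj τ₀ hhyp
    have hjt : j < t := by omega
    have hbj1 : b (j + 1) < b j := hbanti j (j + 1) (by omega) (by omega)
    have hbj : b j ≤ m - 2 := hb j (by omega)
    obtain ⟨w, hw⟩ := hhyp (j + 1) (by omega) (by omega)
    set q := cn (j + 1) with hq
    have hw2 : (p : RG p m i) ^ (b (j + 1) + (m - 1 - b j)) *
        ((sg p m i ^ (p ^ q) - 1) * τ₀) = (p : RG p m i) ^ (m - 1) * w := by
      rw [pow_add]
      linear_combination hw
    obtain ⟨u, hu⟩ := pow_p_div hp (by omega) (by omega) _ _ hw2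
    have hδe : (m - 1) - (b (j + 1) + (m - 1 - b j)) = b j - b (j + 1) := by omega
    rw [hδe] at hu
    set δ := b j - b (j + 1) with hδdef
    have hδ1 : 1 ≤ δ := by omega
    have hδm : δ ≤ m := by omega
    have hred : (sg p δ i ^ (p ^ q) - 1) * redHom p m δ i hδm τ₀ = 0 := by
      have h0 : redHom p m δ i hδm ((sg p m i ^ (p ^ q) - 1) * τ₀) = 0 := by
        rw [hu, map_mul, map_pow, map_natCast, p_pow_m_zero δ i, zero_mul]
      rw [map_mul, map_sub, map_pow, redHom_sg, map_one] at h0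
      exact h0
    have hqi : q ≤ i := le_of_lt (hcn (j + 1) (by omega) (by omega))
    obtain ⟨v, hv⟩ := ann_pel hp hδ1 q hqi _ hred
    obtain ⟨vt, hvt⟩ := redHom_surj hp hδm v
    have hker : redHom p m δ i hδm (τ₀ - Pel p m i i q * vt) = 0 := by
      rw [map_sub, map_mul, redHom_pel, hvt, hv, sub_self]
    obtain ⟨τ₁, hτ₁⟩ := redHom_eq_zero hδm _ hker
    have hτ0 : τ₀ = Pel p m i i q * vt + (p : RG p m i) ^ δ * τ₁ := by
      linear_combination hτ₁
    have hihhyp : ∀ l, j + 1 < l → l ≤ t →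
        ∃ w', (p : RG p m i) ^ (b l) * ((sg p m i ^ (p ^ cn l) - 1) *
          ((p : RG p m i) ^ (m - 1 - b (j + 1)) * τ₁)) = (p : RG p m i) ^ (m - 1) * w' := by
      intro l hl1 hl2
      obtain ⟨w', hw'⟩ := hhyp l (by omega) hl2
      refine ⟨w', ?_⟩
      have hkill : (sg p m i ^ (p ^ cn l) - 1) * Pel p m i i q = 0 :=
        sg_sub_one_mul_pel hp m i q (cn l) hqi (hcnmono (j + 1) l (by omega) (by omega) hl2)
      have hexp : m - 1 - b (j + 1) = (m - 1 - b j) + δ := by omega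
      have hee : (p : RG p m i) ^ (m - 1 - b (j + 1)) * τ₁ =
          (p : RG p m i) ^ (m - 1 - b j) * ((p : RG p m i) ^ δ * τ₁) := by
        rw [hexp, pow_add, mul_assoc]
      have hsub : (p : RG p m i) ^ δ * τ₁ = τ₀ - Pel p m i i q * vt := by
        linear_combination - hτ0
      rw [hee, hsub]
      linear_combination hw' - ((p : RG p m i) ^ (b l) * ((p : RG p m i) ^ (m - 1 - b j) * vt)) * hkill
    obtain ⟨α, τ, hdec⟩ := ih (j + 1) (by omega) τ₁ hihhyp
    refine ⟨fun l => if l = j then vt else α l, τ, ?_⟩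
    rw [Finset.sum_eq_sum_Ico_succ_bot hjt]
    have hsum : ∑ l ∈ Finset.Ico (j + 1) t,
        (if l = j then vt else α l) *
          ((p : RG p m i) ^ (m - 1 - b l) * Pel p m i i (cn (l + 1))) =
        ∑ l ∈ Finset.Ico (j + 1) t,
          α l * ((p : RG p m i) ^ (m - 1 - b l) * Pel p m i i (cn (l + 1))) := by
      refine Finset.sum_congr rfl fun l hl => ?_
      have := (Finset.mem_Ico.mp hl).1
      rw [if_neg (by omega)]
    rw [hsum]
    simp only [eq_self_iff_true, if_true]
    have hexp2 : m - 1 - b (j + 1) = (m - 1 - b j) + δ := by omega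
    have hee2 : (p : RG p m i) ^ (m - 1 - b j) * ((p : RG p m i) ^ δ * τ₁) =
        (p : RG p m i) ^ (m - 1 - b (j + 1)) * τ₁ := by
      rw [hexp2, pow_add, mul_assoc]
    linear_combination ((p : RG p m i) ^ (m - 1 - b j)) * hτ0 + hee2 + hdec

end TechAux

open TechAux in
/-- Lemma 2.9 (`le:tech`). -/
theorem tech (p n m : ℕ) (hp : p.Prime) (hm : 2 ≤ m) (i : ℕ) (hin : i ≤ n)
    (t : ℕ) (b : ℕ → ℕ) (c : ℕ → WithBot ℕ)
    (hb : ∀ j ≤ t, b j ≤ m - 2)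
    (hbanti : ∀ j k : ℕ, j < k → k ≤ t → b k < b j)
    (hc : ∀ j ≤ t, c j < (i : WithBot ℕ))
    (hcmono : ∀ j k : ℕ, j < k → k ≤ t → c j < c k)
    (ht : c 0 = ⊥ → 0 < t)
    (d : ℤ)
    (h1 : d ^ p ^ i ∈ Uset p m)
    (h2 : b t = 0)
    (h3 : ∀ j : ℕ, 0 < j → j ≤ t → c j ≠ ⊥ →
      phiM p m i d (PelW p m i i (c j)) ∈ Ideal.span {(p : Rm p m) ^ (1 + b (j - 1))})
    (h3' : c 0 ≠ ⊥ → phiM p m i d (PelW p m i i (c 0)) = 0)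
    (r : RG p m i) :
    (c 0 = ⊥ →
      barMap p m i ((sg p m i - (d : RG p m i)) * r) ∈
        (Ideal.span ({(p : RG p (m - 1) i) ^ b 0} ∪
          {x : RG p (m - 1) i | ∃ j : ℕ, 1 ≤ j ∧ j ≤ t ∧
            x = (p : RG p (m - 1) i) ^ b j *
              (sigmaPow p (m - 1) i (c j) - 1)})).annihilator →
      (sg p m i - (d : RG p m i)) * r ∈
        Ideal.span (insert
          ((p : RG p m i) ^ (m - 1) * (sg p m i - (d : RG p m i)))
          {x : RG p m i | ∃ j < t,
            x = (p : RG p m i) ^ (m - 1 - b j) * PelW p m i i (c (j + 1))})) ∧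
    (c 0 ≠ ⊥ →
      barMap p m i ((sg p m i - (d : RG p m i)) * r) ∈
        (Ideal.span {x : RG p (m - 1) i | ∃ j ≤ t,
          x = (p : RG p (m - 1) i) ^ b j *
            (sigmaPow p (m - 1) i (c j) - 1)}).annihilator →
      (sg p m i - (d : RG p m i)) * r ∈
        Ideal.span (insert (PelW p m i i (c 0)) (insert
          ((p : RG p m i) ^ (m - 1) * (sg p m i - (d : RG p m i)))
          {x : RG p m i | ∃ j < t,
            x = (p : RG p m i) ^ (m - 1 - b j) * PelW p m i i (c (j + 1))}))) := by
  haveI : NeZero (p ^ i) := ⟨pow_ne_zero _ hp.ne_zero⟩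
  have hdm : ((d : ℤ) : Rm p m) ^ (p ^ i) = 1 := by
    obtain ⟨kk, hkk⟩ := h1
    have h0 := congrArg (fun z : ℤ => ((z : ℤ) : Rm p m)) hkk
    push_cast at h0
    rw [h0, p_pow_m_zero_R, zero_mul, add_zero]
  set ρ := (sg p m i - (d : RG p m i)) * r with hρ
  set cn : ℕ → ℕ := fun l => (c l).unbotD 0 with hcn_def
  constructor
  · intro hc0 hann
    have ht1 : 0 < t := ht hc0
    have hcoe : ∀ l, 1 ≤ l → l ≤ t → c l = (cn l : WithBot ℕ) := by
      intro l hl1 hl2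
      have hbotlt : (⊥ : WithBot ℕ) < c l := by
        rw [← hc0]
        exact hcmono 0 l hl1 hl2
      obtain ⟨x, hx⟩ := WithBot.ne_bot_iff_exists.mp hbotlt.ne'
      simp only [hcn_def]
      rw [← hx, WithBot.unbotD_coe, Nat.cast_withBot]
    have hcnlt : ∀ l, 1 ≤ l → l ≤ t → cn l < i := by
      intro l hl1 hl2
      have := hc l hl2
      rw [hcoe l hl1 hl2] at this
      exact_mod_cast this
    have hcnmono' : ∀ j k, 1 ≤ j → j ≤ k → k ≤ t → cn j ≤ cn k := by
      intro j k hj1 hjk hkt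
      rcases eq_or_lt_of_le hjk with h | h
      · rw [h]
      · have := hcmono j k h hkt
        rw [hcoe j hj1 (by omega), hcoe k (by omega) hkt] at this
        exact_mod_cast this.le
    have hi1 : 1 ≤ i := by
      have := hcnlt 1 le_rfl ht1
      omega
    have hannmul : ∀ s ∈ ({(p : RG p (m - 1) i) ^ b 0} ∪
        {x : RG p (m - 1) i | ∃ j : ℕ, 1 ≤ j ∧ j ≤ t ∧
          x = (p : RG p (m - 1) i) ^ b j * (sigmaPow p (m - 1) i (c j) - 1)}),
        barMap p m i ρ * s = 0 := by
      intro s hs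
      have := Submodule.mem_annihilator.mp hann s (Ideal.subset_span hs)
      rwa [smul_eq_mul] at this
    have hann0 : redHom p m (m - 1) i (Nat.sub_le m 1) (ρ * (p : RG p m i) ^ b 0) = 0 := by
      rw [map_mul, map_pow, map_natCast]
      have h0 := hannmul ((p : RG p (m - 1) i) ^ b 0) (Set.mem_union_left _ rfl)
      rwa [barMap_eq_redHom] at h0
    obtain ⟨w0, hw0⟩ := redHom_eq_zero (Nat.sub_le m 1) _ hann0
    have hw0' : (p : RG p m i) ^ b 0 * ρ = (p : RG p m i) ^ (m - 1) * w0 := by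
      linear_combination hw0
    have hb0 : b 0 ≤ m - 2 := hb 0 (by omega)
    obtain ⟨τ₀, hτ₀⟩ := pow_p_div hp (show b 0 ≤ m - 1 by omega) (by omega) _ _ hw0'
    have hcore : ∀ l, 0 < l → l ≤ t →
        ∃ w, (p : RG p m i) ^ b l * ((sg p m i ^ p ^ cn l - 1) *
          ((p : RG p m i) ^ (m - 1 - b 0) * τ₀)) = (p : RG p m i) ^ (m - 1) * w := by
      intro l hl1 hl2
      have hgen : ((p : RG p (m - 1) i) ^ b l * (sigmaPow p (m - 1) i (c l) - 1)) ∈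
          ({(p : RG p (m - 1) i) ^ b 0} ∪
            {x : RG p (m - 1) i | ∃ j : ℕ, 1 ≤ j ∧ j ≤ t ∧
              x = (p : RG p (m - 1) i) ^ b j * (sigmaPow p (m - 1) i (c j) - 1)}) :=
        Set.mem_union_right _ ⟨l, hl1, hl2, rfl⟩
      have h0 := hannmul _ hgen
      have hsig : sigmaPow p (m - 1) i (c l) = sg p (m - 1) i ^ p ^ cn l := by
        simp only [hcoe l hl1 hl2, sigmaPow, Nat.cast_withBot, WithBot.recBotCoe_coe]
      rw [hsig, barMap_eq_redHom] at h0
      have hX : redHom p m (m - 1) i (Nat.sub_le m 1)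
          ((p : RG p m i) ^ b l * (sg p m i ^ p ^ cn l - 1)) =
          (p : RG p (m - 1) i) ^ b l * (sg p (m - 1) i ^ p ^ cn l - 1) := by
        rw [map_mul, map_pow, map_natCast, map_sub, map_pow, redHom_sg, map_one]
      have h0' : redHom p m (m - 1) i (Nat.sub_le m 1)
          (ρ * ((p : RG p m i) ^ b l * (sg p m i ^ p ^ cn l - 1))) = 0 := by
        rw [map_mul, hX]
        exact h0
      obtain ⟨w, hw⟩ := redHom_eq_zero (Nat.sub_le m 1) _ h0'
      refine ⟨w, ?_⟩
      rw [← hτ₀]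
      linear_combination hw
    obtain ⟨α, τ, hdec⟩ := core hp m i t hm b cn hb hbanti hcnlt hcnmono' h2 t 0
      (by omega) τ₀ hcore
    have hdecρ : ρ = (∑ l ∈ Finset.Ico 0 t,
        α l * ((p : RG p m i) ^ (m - 1 - b l) * Pel p m i i (cn (l + 1)))) +
        (p : RG p m i) ^ (m - 1) * τ := by
      rw [hτ₀]
      exact hdec
    have hψρ : psiHom p m i d hdm ρ = 0 := by
      rw [hρ, map_mul, map_sub, psi_sg hp hi1, map_intCast, sub_self, zero_mul]
    have hsum0 : ∀ l ∈ Finset.Ico 0 t,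
        psiHom p m i d hdm (α l * ((p : RG p m i) ^ (m - 1 - b l) * Pel p m i i (cn (l + 1)))) = 0 := by
      intro l hl
      have hlt : l < t := (Finset.mem_Ico.mp hl).2
      have h3l := h3 (l + 1) (by omega) (by omega)
        (by rw [hcoe (l + 1) (by omega) (by omega)]; exact WithBot.coe_ne_bot)
      simp only [Nat.add_sub_cancel] at h3l
      rw [hcoe (l + 1) (by omega) (by omega)] at h3l
      have hPelW : PelW p m i i ((cn (l + 1) : ℕ) : WithBot ℕ) = Pel p m i i (cn (l + 1)) := by
        simp only [PelW, Nat.cast_withBot, WithBot.recBotCoe_coe]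
      rw [hPelW, Ideal.mem_span_singleton] at h3l
      obtain ⟨e, he⟩ := h3l
      rw [phiM_eq_psi hp d hdm] at he
      rw [map_mul, map_mul, map_pow, map_natCast, he]
      have hppow : (p : Rm p m) ^ (m - 1 - b l) * (p : Rm p m) ^ (1 + b l) = 0 := by
        rw [← pow_add]
        have hbl : b l ≤ m - 2 := hb l (by omega)
        have hee : (m - 1 - b l) + (1 + b l) = m := by omega
        rw [hee, p_pow_m_zero_R]
      linear_combination (psiHom p m i d hdm (α l) * e) * hppow
    have hpψτ : (p : Rm p m) ^ (m - 1) * psiHom p m i d hdm τ = 0 := by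
      have h5 := congrArg (psiHom p m i d hdm) hdecρ
      rw [hψρ, map_add, map_mul, map_pow, map_natCast, map_sum,
        Finset.sum_eq_zero hsum0, zero_add] at h5
      linear_combination - h5
    obtain ⟨uu, huu⟩ := zmod_div hp (show m - 1 ≤ m by omega) le_rfl
      (psiHom p m i d hdm τ) 0
      (by rw [hpψτ, p_pow_m_zero_R, zero_mul])
    have hm1 : m - (m - 1) = 1 := by omega
    rw [hm1, pow_one] at huu
    obtain ⟨wq, hwq⟩ := sub_d_div hp hi1 d hdm τ
    have hzero : (p : RG p m i) ^ (m - 1) * (p : RG p m i) = 0 := by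
      rw [← pow_succ]
      have he : m - 1 + 1 = m := by omega
      rw [he, p_pow_m_zero]
    have hfin : (p : RG p m i) ^ (m - 1) * τ =
        ((p : RG p m i) ^ (m - 1) * (sg p m i - (d : RG p m i))) * wq := by
      rw [hwq, huu, map_mul, map_natCast]
      linear_combination (algebraMap (Rm p m) (RG p m i) uu) * hzero
    have hfinal : ρ = (∑ l ∈ Finset.Ico 0 t,
        α l * ((p : RG p m i) ^ (m - 1 - b l) * Pel p m i i (cn (l + 1)))) +
        ((p : RG p m i) ^ (m - 1) * (sg p m i - (d : RG p m i))) * wq := by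
      rw [hdecρ, hfin]
    rw [hfinal]
    refine Ideal.add_mem _ (Ideal.sum_mem _ fun l hl => ?_) ?_
    · refine Ideal.mul_mem_left _ _ (Ideal.subset_span (Set.mem_insert_of_mem _ ?_))
      have hlt : l < t := (Finset.mem_Ico.mp hl).2
      refine ⟨l, hlt, ?_⟩
      rw [hcoe (l + 1) (by omega) (by omega)]
      simp only [PelW, Nat.cast_withBot, WithBot.recBotCoe_coe]
    · exact Ideal.mul_mem_right _ _ (Ideal.subset_span (Set.mem_insert _ _))
  · intro hc0 hann
    have hcoe : ∀ l, l ≤ t → c l = (cn l : WithBot ℕ) := by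
      intro l hl2
      have hne : c l ≠ ⊥ := by
        rcases Nat.eq_zero_or_pos l with h | h
        · rw [h]; exact hc0
        · have h01 : c 0 < c l := hcmono 0 l h hl2
          have hbl : (⊥ : WithBot ℕ) < c 0 := WithBot.bot_lt_iff_ne_bot.mpr hc0
          exact (hbl.trans h01).ne'
      obtain ⟨x, hx⟩ := WithBot.ne_bot_iff_exists.mp hne
      simp only [hcn_def]
      rw [← hx, WithBot.unbotD_coe, Nat.cast_withBot]
    have hcnlt : ∀ l, l ≤ t → cn l < i := by
      intro l hl2
      have hlt := hc l hl2
      rw [hcoe l hl2] at hlt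
      exact_mod_cast hlt
    have hcnmono' : ∀ j k, j ≤ k → k ≤ t → cn j ≤ cn k := by
      intro j k hjk hkt
      rcases eq_or_lt_of_le hjk with h | h
      · rw [h]
      · have hlt := hcmono j k h hkt
        rw [hcoe j (by omega), hcoe k hkt] at hlt
        exact_mod_cast hlt.le
    have hi1 : 1 ≤ i := by
      have := hcnlt 0 (by omega)
      omega
    have hannmul : ∀ s ∈ {x : RG p (m - 1) i | ∃ j ≤ t,
        x = (p : RG p (m - 1) i) ^ b j * (sigmaPow p (m - 1) i (c j) - 1)},
        barMap p m i ρ * s = 0 := by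
      intro s hs
      have hmem := Submodule.mem_annihilator.mp hann s (Ideal.subset_span hs)
      rwa [smul_eq_mul] at hmem
    have hext : ∀ l, l ≤ t → ∃ w,
        ρ * ((p : RG p m i) ^ b l * (sg p m i ^ p ^ cn l - 1)) =
        (p : RG p m i) ^ (m - 1) * w := by
      intro l hl2
      have hgen : ((p : RG p (m - 1) i) ^ b l * (sigmaPow p (m - 1) i (c l) - 1)) ∈
          {x : RG p (m - 1) i | ∃ j ≤ t,
            x = (p : RG p (m - 1) i) ^ b j * (sigmaPow p (m - 1) i (c j) - 1)} :=
        ⟨l, hl2, rfl⟩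
      have h0 := hannmul _ hgen
      have hsig : sigmaPow p (m - 1) i (c l) = sg p (m - 1) i ^ p ^ cn l := by
        simp only [hcoe l hl2, sigmaPow, Nat.cast_withBot, WithBot.recBotCoe_coe]
      rw [hsig, barMap_eq_redHom] at h0
      have hX : redHom p m (m - 1) i (Nat.sub_le m 1)
          ((p : RG p m i) ^ b l * (sg p m i ^ p ^ cn l - 1)) =
          (p : RG p (m - 1) i) ^ b l * (sg p (m - 1) i ^ p ^ cn l - 1) := by
        rw [map_mul, map_pow, map_natCast, map_sub, map_pow, redHom_sg, map_one]
      have h0' : redHom p m (m - 1) i (Nat.sub_le m 1)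
          (ρ * ((p : RG p m i) ^ b l * (sg p m i ^ p ^ cn l - 1))) = 0 := by
        rw [map_mul, hX]
        exact h0
      exact redHom_eq_zero (Nat.sub_le m 1) _ h0'
    have hb0 : b 0 ≤ m - 2 := hb 0 (by omega)
    obtain ⟨w0, hw0⟩ := hext 0 (by omega)
    have hw0' : (p : RG p m i) ^ b 0 * ((sg p m i ^ p ^ cn 0 - 1) * ρ) =
        (p : RG p m i) ^ (m - 1) * w0 := by
      linear_combination hw0
    obtain ⟨u0, hu0⟩ := pow_p_div hp (show b 0 ≤ m - 1 by omega) (by omega) _ _ hw0'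
    have hδ01 : 1 ≤ m - 1 - b 0 := by omega
    have hδ0m : m - 1 - b 0 ≤ m := by omega
    have hcn0i : cn 0 ≤ i := le_of_lt (hcnlt 0 (by omega))
    have hred : (sg p (m - 1 - b 0) i ^ p ^ cn 0 - 1) *
        redHom p m (m - 1 - b 0) i hδ0m ρ = 0 := by
      have h0 : redHom p m (m - 1 - b 0) i hδ0m ((sg p m i ^ p ^ cn 0 - 1) * ρ) = 0 := by
        rw [hu0, map_mul, map_pow, map_natCast, p_pow_m_zero (m - 1 - b 0) i, zero_mul]
      rw [map_mul, map_sub, map_pow, redHom_sg, map_one] at h0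
      exact h0
    obtain ⟨v0, hv0⟩ := ann_pel hp hδ01 (cn 0) hcn0i _ hred
    obtain ⟨vt0, hvt0⟩ := redHom_surj hp hδ0m v0
    have hker : redHom p m (m - 1 - b 0) i hδ0m (ρ - Pel p m i i (cn 0) * vt0) = 0 := by
      rw [map_sub, map_mul (redHom p m (m - 1 - b 0) i hδ0m) (Pel p m i i (cn 0)) vt0,
        redHom_pel, hvt0, hv0, sub_self]
    obtain ⟨τ₀, hτ₀⟩ := redHom_eq_zero hδ0m _ hker
    have hρdec0 : ρ = Pel p m i i (cn 0) * vt0 + (p : RG p m i) ^ (m - 1 - b 0) * τ₀ := by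
      linear_combination hτ₀
    have hcore : ∀ l, 0 < l → l ≤ t →
        ∃ w, (p : RG p m i) ^ b l * ((sg p m i ^ p ^ cn l - 1) *
          ((p : RG p m i) ^ (m - 1 - b 0) * τ₀)) = (p : RG p m i) ^ (m - 1) * w := by
      intro l hl1 hl2
      obtain ⟨w, hw⟩ := hext l hl2
      have hkill : (sg p m i ^ p ^ cn l - 1) * Pel p m i i (cn 0) = 0 :=
        sg_sub_one_mul_pel hp m i (cn 0) (cn l) hcn0i (hcnmono' 0 l (by omega) hl2)
      refine ⟨w, ?_⟩
      have hsub : (p : RG p m i) ^ (m - 1 - b 0) * τ₀ = ρ - Pel p m i i (cn 0) * vt0 := by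
        linear_combination - hρdec0
      rw [hsub]
      linear_combination hw - ((p : RG p m i) ^ b l * vt0) * hkill
    obtain ⟨α, τ, hdec⟩ := core hp m i t hm b cn hb hbanti
      (fun j _ hj => hcnlt j hj) (fun j k _ hjk hkt => hcnmono' j k hjk hkt) h2 t 0
      (by omega) τ₀ hcore
    have hdecρ : ρ = Pel p m i i (cn 0) * vt0 + ((∑ l ∈ Finset.Ico 0 t,
        α l * ((p : RG p m i) ^ (m - 1 - b l) * Pel p m i i (cn (l + 1)))) +
        (p : RG p m i) ^ (m - 1) * τ) := by
      rw [hρdec0, hdec]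
    have hψρ : psiHom p m i d hdm ρ = 0 := by
      rw [hρ, map_mul, map_sub, psi_sg hp hi1, map_intCast, sub_self, zero_mul]
    have hψpel0 : psiHom p m i d hdm (Pel p m i i (cn 0)) = 0 := by
      have h30 := h3' hc0
      rw [hcoe 0 (by omega)] at h30
      simp only [PelW, Nat.cast_withBot, WithBot.recBotCoe_coe] at h30
      rwa [phiM_eq_psi hp d hdm] at h30
    have hsum0 : ∀ l ∈ Finset.Ico 0 t,
        psiHom p m i d hdm (α l * ((p : RG p m i) ^ (m - 1 - b l) *
          Pel p m i i (cn (l + 1)))) = 0 := by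
      intro l hl
      have hlt : l < t := (Finset.mem_Ico.mp hl).2
      have h3l := h3 (l + 1) (by omega) (by omega)
        (by rw [hcoe (l + 1) (by omega)]; simp [Nat.cast_withBot])
      simp only [Nat.add_sub_cancel] at h3l
      rw [hcoe (l + 1) (by omega)] at h3l
      have hPelW : PelW p m i i ((cn (l + 1) : ℕ) : WithBot ℕ) = Pel p m i i (cn (l + 1)) := by
        simp only [PelW, Nat.cast_withBot, WithBot.recBotCoe_coe]
      rw [hPelW, Ideal.mem_span_singleton] at h3l
      obtain ⟨e, he⟩ := h3l
      rw [phiM_eq_psi hp d hdm] at he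
      rw [map_mul, map_mul, map_pow, map_natCast, he]
      have hppow : (p : Rm p m) ^ (m - 1 - b l) * (p : Rm p m) ^ (1 + b l) = 0 := by
        rw [← pow_add]
        have hbl : b l ≤ m - 2 := hb l (by omega)
        have hee : (m - 1 - b l) + (1 + b l) = m := by omega
        rw [hee, p_pow_m_zero_R]
      linear_combination (psiHom p m i d hdm (α l) * e) * hppow
    have hpψτ : (p : Rm p m) ^ (m - 1) * psiHom p m i d hdm τ = 0 := by
      have h5 := congrArg (psiHom p m i d hdm) hdecρ
      rw [hψρ, map_add, map_add, map_mul, hψpel0, zero_mul, map_mul, map_pow,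
        map_natCast, map_sum, Finset.sum_eq_zero hsum0, zero_add, zero_add] at h5
      linear_combination - h5
    obtain ⟨uu, huu⟩ := zmod_div hp (show m - 1 ≤ m by omega) le_rfl
      (psiHom p m i d hdm τ) 0
      (by rw [hpψτ, p_pow_m_zero_R, zero_mul])
    have hm1 : m - (m - 1) = 1 := by omega
    rw [hm1, pow_one] at huu
    obtain ⟨wq, hwq⟩ := sub_d_div hp hi1 d hdm τ
    have hzero : (p : RG p m i) ^ (m - 1) * (p : RG p m i) = 0 := by
      rw [← pow_succ]
      have he : m - 1 + 1 = m := by omega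
      rw [he, p_pow_m_zero]
    have hfin : (p : RG p m i) ^ (m - 1) * τ =
        ((p : RG p m i) ^ (m - 1) * (sg p m i - (d : RG p m i))) * wq := by
      rw [hwq, huu, map_mul, map_natCast]
      linear_combination (algebraMap (Rm p m) (RG p m i) uu) * hzero
    have hfinal : ρ = Pel p m i i (cn 0) * vt0 + ((∑ l ∈ Finset.Ico 0 t,
        α l * ((p : RG p m i) ^ (m - 1 - b l) * Pel p m i i (cn (l + 1)))) +
        ((p : RG p m i) ^ (m - 1) * (sg p m i - (d : RG p m i))) * wq) := by
      rw [hdecρ, hfin]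
    rw [hfinal]
    have hPelc0 : PelW p m i i (c 0) = Pel p m i i (cn 0) := by
      rw [hcoe 0 (by omega)]
      simp only [PelW, Nat.cast_withBot, WithBot.recBotCoe_coe]
    refine Ideal.add_mem _ ?_ (Ideal.add_mem _ (Ideal.sum_mem _ fun l hl => ?_) ?_)
    · refine Ideal.mul_mem_right _ _ (Ideal.subset_span ?_)
      rw [← hPelc0]
      exact Set.mem_insert _ _
    · refine Ideal.mul_mem_left _ _ (Ideal.subset_span
        (Set.mem_insert_of_mem _ (Set.mem_insert_of_mem _ ?_)))
      have hlt : l < t := (Finset.mem_Ico.mp hl).2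
      refine ⟨l, hlt, ?_⟩
      rw [hcoe (l + 1) (by omega)]
      simp only [PelW, Nat.cast_withBot, WithBot.recBotCoe_coe]
    · exact Ideal.mul_mem_right _ _ (Ideal.subset_span
        (Set.mem_insert_of_mem _ (Set.mem_insert _ _)))
end
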